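/- Let γ_AB = [[A, C],[Cᵀ, B]] be the covariance matrix of a bipartite state with respect to LOOs on ℂ^{d_A} and ℂ^{d_B}. If ‖C‖_tr > √((d_A − Tr ρ_A²)(1 − Tr ρ_B²)), then there is no PSD matrix κ_B that is a convex combination of covariance matrices of pure states on ℂ^{d_B} (so that Tr κ_B ≥ d_B − 1) with γ_AB ≥ 0_A ⊕ κ_B. -/

import Mathlib

open Matrix BigOperators Finset
open scoped RealInnerProductSpace
open Kronecker ComplexOrder

/-- The positive semidefinite square root of a positive semidefinite matrix
(as defined in Mathlib of December 2024, since removed). -/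
noncomputable def Matrix.PosSemidef.sqrt {n : Type*} [Fintype n] [DecidableEq n] {𝕜 : Type*}
    [RCLike 𝕜] {A : Matrix n n 𝕜} (hA : A.PosSemidef) : Matrix n n 𝕜 :=
  hA.1.eigenvectorUnitary.1 * diagonal ((↑) ∘ (√·) ∘ hA.1.eigenvalues) *
  (star hA.1.eigenvectorUnitary : Matrix n n 𝕜)

/-- Trace norm of a real matrix: `Tr √(MᵀM)`, the sum of singular values. -/
noncomputable def traceNorm {m n : Type*} [Fintype m] [Fintype n] [DecidableEq n]
    (M : Matrix m n ℝ) : ℝ :=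
  (Matrix.posSemidef_conjTranspose_mul_self M).sqrt.trace

/-- Symmetrized covariance matrix of a state `σ` with respect to a family of
observables `O` indexed by `ι`. -/
noncomputable def covMatG {d : Type*} [Fintype d] {ι : Type*} [Fintype ι]
    (O : ι → Matrix d d ℂ) (σ : Matrix d d ℂ) : Matrix ι ι ℝ :=
  Matrix.of fun i j =>
    ((σ * (O i * O j)).trace.re + (σ * (O j * O i)).trace.re) / 2
      - (σ * O i).trace.re * (σ * O j).trace.re

variable {m n : Type*} [Fintype m] [Fintype n]

lemma blockPSD_cs {P : Matrix m m ℝ} {Q : Matrix n n ℝ} {C : Matrix m n ℝ}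
    (h : (fromBlocks P C Cᵀ Q).PosSemidef) (x : m → ℝ) (y : n → ℝ) :
    (x ⬝ᵥ C *ᵥ y) ^ 2 ≤ (x ⬝ᵥ P *ᵥ x) * (y ⬝ᵥ Q *ᵥ y) := by
  have key : ∀ t : ℝ, 0 ≤ (y ⬝ᵥ Q *ᵥ y) * (t * t) + (2 * (x ⬝ᵥ C *ᵥ y)) * t + (x ⬝ᵥ P *ᵥ x) := by
    intro t
    have h2 := h.dotProduct_mulVec_nonneg (Sum.elim x (t • y))
    have hs : star (Sum.elim x (t • y)) = Sum.elim x (t • y) := by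
      simp [star_trivial]
    rw [hs, fromBlocks_mulVec, sumElim_dotProduct_sumElim] at h2
    have e1 : y ⬝ᵥ Cᵀ *ᵥ x = x ⬝ᵥ C *ᵥ y := by
      rw [mulVec_transpose, dotProduct_mulVec, dotProduct_comm]
    calc (0:ℝ) ≤ _ := h2
    _ = (y ⬝ᵥ Q *ᵥ y) * (t * t) + (2 * (x ⬝ᵥ C *ᵥ y)) * t + (x ⬝ᵥ P *ᵥ x) := by
        simp only [Sum.elim_comp_inl, Sum.elim_comp_inr, dotProduct_add, mulVec_smul,
          dotProduct_smul, smul_dotProduct, smul_eq_mul, e1]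
        ring
  have hd := discrim_le_zero key
  rw [discrim] at hd
  nlinarith [hd]

lemma conjT_eq_transpose (C : Matrix m n ℝ) : Cᴴ = Cᵀ := by
  ext i j; simp [conjTranspose_apply]

section keylemma
variable [DecidableEq m] [DecidableEq n]

lemma traceNorm_eq_sum_sqrt (C : Matrix m n ℝ) :
    traceNorm C = ∑ i, Real.sqrt ((Matrix.posSemidef_conjTranspose_mul_self C).1.eigenvalues i) := by
  set hH := Matrix.posSemidef_conjTranspose_mul_self C
  have hU : (star hH.1.eigenvectorUnitary : Matrix n n ℝ) *
      (hH.1.eigenvectorUnitary : Matrix n n ℝ) = 1 :=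
    (Matrix.mem_unitaryGroup_iff').mp hH.1.eigenvectorUnitary.2
  rw [traceNorm, Matrix.PosSemidef.sqrt, Matrix.trace_mul_cycle, hU,
    Matrix.one_mul, Matrix.trace_diagonal]
  simp

lemma euclid_inner_eq (x y : EuclideanSpace ℝ m) : ⟪x, y⟫ = (x : m → ℝ) ⬝ᵥ (y : m → ℝ) := by
  simp [PiLp.inner_apply, dotProduct]
  exact Finset.sum_congr rfl fun _ _ => mul_comm _ _

lemma psd_block_P_psd {P : Matrix m m ℝ} {Q : Matrix n n ℝ} {C : Matrix m n ℝ}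
    (h : (fromBlocks P C Cᵀ Q).PosSemidef) : P.PosSemidef := by
  refine Matrix.PosSemidef.of_dotProduct_mulVec_nonneg ?_ ?_
  · have h1 := h.1
    rw [Matrix.IsHermitian, fromBlocks_conjTranspose] at h1
    have := congrArg Matrix.toBlocks₁₁ h1
    simpa [Matrix.toBlocks_fromBlocks₁₁, Matrix.IsSymm] using this
  · intro x
    have h2 := h.dotProduct_mulVec_nonneg (Sum.elim x 0)
    have hs : star (Sum.elim x (0 : n → ℝ)) = Sum.elim x 0 := by simp [star_trivial]
    rw [hs, fromBlocks_mulVec, sumElim_dotProduct_sumElim] at h2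
    simpa using h2
  
lemma psd_block_Q_psd {P : Matrix m m ℝ} {Q : Matrix n n ℝ} {C : Matrix m n ℝ}
    (h : (fromBlocks P C Cᵀ Q).PosSemidef) : Q.PosSemidef := by
  refine Matrix.PosSemidef.of_dotProduct_mulVec_nonneg ?_ ?_
  · have h1 := h.1
    rw [Matrix.IsHermitian, fromBlocks_conjTranspose] at h1
    have := congrArg Matrix.toBlocks₂₂ h1
    simpa [Matrix.toBlocks_fromBlocks₂₂, Matrix.IsSymm] using this
  · intro y
    have h2 := h.dotProduct_mulVec_nonneg (Sum.elim (0 : m → ℝ) y)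
    have hs : star (Sum.elim (0 : m → ℝ) y) = Sum.elim (0 : m → ℝ) y := by simp [star_trivial]
    rw [hs, fromBlocks_mulVec, sumElim_dotProduct_sumElim] at h2
    simpa using h2

/-- For a PSD real matrix `P` and an orthonormal family `u`, `∑ uᵢᵀ P uᵢ ≤ Tr P`. -/
lemma sum_quadform_le_trace {ι : Type*} [Fintype ι] {P : Matrix m m ℝ} (hP : P.PosSemidef)
    (u : ι → EuclideanSpace ℝ m) (hu : Orthonormal ℝ u) :
    ∑ i, (u i : m → ℝ) ⬝ᵥ P *ᵥ (u i : m → ℝ) ≤ P.trace := by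
  obtain ⟨S, hSpsd, hSS⟩ : ∃ S : Matrix m m ℝ, S.PosSemidef ∧ S * S = P :=
    open scoped MatrixOrder in
    ⟨CFC.sqrt P, Matrix.nonneg_iff_posSemidef.mp (CFC.sqrt_nonneg P), CFC.sqrt_mul_sqrt_self P hP.nonneg⟩
  have hSsymm : ∀ a b, S a b = S b a := by
    intro a b
    conv_lhs => rw [← hSpsd.1]
    simp [conjTranspose_apply]
  -- quadratic form through the square root
  have hq : ∀ x : m → ℝ, x ⬝ᵥ P *ᵥ x = ∑ r, (S *ᵥ x) r ^ 2 := by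
    intro x
    rw [← hSS, ← Matrix.mulVec_mulVec]
    rw [Matrix.dotProduct_mulVec]
    have : x ᵥ* S = S *ᵥ x := by
      ext r
      simp [Matrix.vecMul, Matrix.mulVec, dotProduct]
      exact Finset.sum_congr rfl fun c _ => by rw [hSsymm c r, mul_comm]
    rw [this]
    simp [dotProduct, pow_two]
  calc ∑ i, (u i : m → ℝ) ⬝ᵥ P *ᵥ (u i : m → ℝ)
      = ∑ i, ∑ r, (S *ᵥ (u i : m → ℝ)) r ^ 2 := by
        exact Finset.sum_congr rfl fun i _ => hq _
    _ = ∑ r, ∑ i, (S *ᵥ (u i : m → ℝ)) r ^ 2 := Finset.sum_comm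
    _ ≤ ∑ r, ∑ c, (S r c) ^ 2 := by
        apply Finset.sum_le_sum
        intro r _
        -- Bessel's inequality with vector z r := fun c => S r c
        have hb := hu.sum_inner_products_le (s := Finset.univ)
          ((WithLp.equiv 2 (m → ℝ)).symm (fun c => S r c))
        calc ∑ i, (S *ᵥ (u i : m → ℝ)) r ^ 2
            = ∑ i, ‖⟪u i, (WithLp.equiv 2 (m → ℝ)).symm (fun c => S r c)⟫‖ ^ 2 := by
              refine Finset.sum_congr rfl fun i _ => ?_
              have hz : ⟪u i, ((WithLp.equiv 2 (m → ℝ)).symm (fun c => S r c))⟫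
                  = (S *ᵥ (u i : m → ℝ)) r := by
                rw [real_inner_comm, euclid_inner_eq]
                simp only [Matrix.mulVec, dotProduct]
                rfl
              rw [hz, Real.norm_eq_abs, sq_abs]
          _ ≤ ‖(WithLp.equiv 2 (m → ℝ)).symm (fun c => S r c)‖ ^ 2 := hb
          _ = ∑ c, (S r c) ^ 2 := by
              rw [EuclideanSpace.norm_eq, Real.sq_sqrt (by positivity)]
              refine Finset.sum_congr rfl fun c _ => ?_
              rw [Real.norm_eq_abs, sq_abs]
              rfl
    _ = P.trace := by
        rw [← hSS]
        rw [Matrix.trace]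
        apply Finset.sum_congr rfl
        intro r _
        simp only [Matrix.diag_apply, Matrix.mul_apply]
        exact (Finset.sum_congr rfl fun c _ => by rw [pow_two]; rw [hSsymm c r]).symm

/-- Key inequality: for a PSD block matrix, `‖C‖_tr ≤ √(Tr P · Tr Q)`. -/
lemma traceNorm_le_sqrt_trace_mul_trace {P : Matrix m m ℝ} {Q : Matrix n n ℝ}
    {C : Matrix m n ℝ} (h : (fromBlocks P C Cᵀ Q).PosSemidef) :
    traceNorm C ≤ Real.sqrt (P.trace * Q.trace) := by
  classical
  set hH := Matrix.posSemidef_conjTranspose_mul_self C with hHdef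
  set lam := hH.1.eigenvalues with hlam
  have hlam0 : ∀ i, 0 ≤ lam i := hH.eigenvalues_nonneg
  set v : n → (n → ℝ) := fun i => ⇑(hH.1.eigenvectorBasis i) with hv
  have hortho : ∀ i j, v i ⬝ᵥ v j = if i = j then 1 else 0 := by
    intro i j
    have := (orthonormal_iff_ite (𝕜 := ℝ)).mp hH.1.eigenvectorBasis.orthonormal i j
    rw [euclid_inner_eq] at this
    exact this
  have hCv : ∀ i j, (C *ᵥ v i) ⬝ᵥ (C *ᵥ v j) = if i = j then lam j else 0 := by
    intro i j
    have h1 : v i ⬝ᵥ (Cᴴ * C) *ᵥ v j = (C *ᵥ v i) ⬝ᵥ (C *ᵥ v j) := by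
      rw [conjT_eq_transpose, ← Matrix.mulVec_mulVec, Matrix.dotProduct_mulVec,
        Matrix.vecMul_transpose]
    rw [← h1, hH.1.mulVec_eigenvectorBasis, dotProduct_smul]
    rw [show ⇑(hH.1.eigenvectorBasis j) = v j from rfl]
    rw [hortho i j]
    by_cases hij : i = j <;> simp [hij] <;> rfl
  -- the u family
  set u : n → (m → ℝ) := fun i => (Real.sqrt (lam i))⁻¹ • (C *ᵥ v i) with hu
  set a : n → ℝ := fun i => if lam i = 0 then 0 else u i ⬝ᵥ P *ᵥ u i with ha
  set b : n → ℝ := fun i => v i ⬝ᵥ Q *ᵥ v i with hb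
  have hPpsd := psd_block_P_psd h
  have hQpsd := psd_block_Q_psd h
  have ha0 : ∀ i, 0 ≤ a i := by
    intro i
    by_cases hli : lam i = 0
    · simp [ha, hli]
    · simpa [ha, hli] using hPpsd.dotProduct_mulVec_nonneg (u i)
  have hb0 : ∀ i, 0 ≤ b i := fun i => by simpa [hb] using hQpsd.dotProduct_mulVec_nonneg (v i)
  have hper : ∀ i, Real.sqrt (lam i) ≤ Real.sqrt (a i * b i) := by
    intro i
    by_cases hli : lam i = 0
    · simp [hli, Real.sqrt_nonneg]
    · have hlpos : 0 < lam i := lt_of_le_of_ne (hlam0 i) (Ne.symm hli)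
      have hs : Real.sqrt (lam i) > 0 := Real.sqrt_pos.mpr hlpos
      have huCv : u i ⬝ᵥ C *ᵥ v i = Real.sqrt (lam i) := by
        have he : u i ⬝ᵥ C *ᵥ v i = (Real.sqrt (lam i))⁻¹ * lam i := by
          rw [hu]
          simp only [smul_dotProduct, smul_eq_mul]
          rw [hCv i i, if_pos rfl]
        rw [he, inv_mul_eq_div, div_eq_iff (ne_of_gt hs), Real.mul_self_sqrt (hlam0 i)]
      have hcs := blockPSD_cs h (u i) (v i)
      rw [huCv] at hcs
      rw [Real.sq_sqrt (hlam0 i)] at hcs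
      have : lam i ≤ a i * b i := by simpa [ha, hli, hb] using hcs
      exact Real.sqrt_le_sqrt this
  -- orthonormality of the u family on the nonzero eigenvalue set
  have huu : ∀ i j, lam i ≠ 0 → lam j ≠ 0 → u i ⬝ᵥ u j = if i = j then 1 else 0 := by
    intro i j hi hj
    rw [hu]
    simp only [smul_dotProduct, dotProduct_smul, smul_eq_mul]
    rw [hCv i j]
    split
    · rename_i hij
      subst hij
      have hlpos : 0 < lam i := lt_of_le_of_ne (hlam0 i) (Ne.symm hi)
      have hs : Real.sqrt (lam i) > 0 := Real.sqrt_pos.mpr hlpos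
      field_simp
      rw [Real.sq_sqrt (hlam0 i)]
    · simp
  -- ∑ a ≤ Tr P  via Bessel on the subtype
  have hsuma : ∑ i, a i ≤ P.trace := by
    have hsub : ∑ i, a i = ∑ i ∈ Finset.univ.filter (fun i => ¬ (lam i = 0)), u i ⬝ᵥ P *ᵥ u i := by
      rw [Finset.sum_filter]
      refine Finset.sum_congr rfl fun i _ => ?_
      by_cases hli : lam i = 0 <;> simp [ha, hli]
    rw [hsub]
    have := sum_quadform_le_trace (ι := {i : n // lam i ≠ 0}) hPpsd
      (fun i => (WithLp.equiv 2 (m → ℝ)).symm (u i.1)) ?ortho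
    case ortho =>
      rw [orthonormal_iff_ite]
      intro i j
      rw [euclid_inner_eq]
      have := huu i.1 j.1 i.2 j.2
      rw [show ((WithLp.equiv 2 (m → ℝ)).symm (u i.1) : m → ℝ) = u i.1 from rfl,
        show ((WithLp.equiv 2 (m → ℝ)).symm (u j.1) : m → ℝ) = u j.1 from rfl, this]
      by_cases hij : i = j
      · simp [hij]
      · have : i.1 ≠ j.1 := fun hc => hij (Subtype.ext hc)
        simp [hij, this]
    have hsub2 : ∑ i ∈ Finset.univ.filter (fun i => ¬ (lam i = 0)), u i ⬝ᵥ P *ᵥ u i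
        = ∑ i : {i : n // lam i ≠ 0}, u i.1 ⬝ᵥ P *ᵥ u i.1 :=
      Finset.sum_subtype _ (by simp) _
    rw [hsub2]
    exact this
  -- ∑ b ≤ Tr Q
  have hsumb : ∑ i, b i ≤ Q.trace := by
    have := sum_quadform_le_trace (ι := n) hQpsd
      (fun i => (WithLp.equiv 2 (n → ℝ)).symm (v i)) ?orthov
    case orthov =>
      rw [orthonormal_iff_ite]
      intro i j
      rw [euclid_inner_eq]
      exact hortho i j
    exact this
  have hsuma0 : 0 ≤ ∑ i, a i := Finset.sum_nonneg fun i _ => ha0 i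
  have hsumb0 : 0 ≤ ∑ i, b i := Finset.sum_nonneg fun i _ => hb0 i
  -- combine
  rw [traceNorm_eq_sum_sqrt]
  calc ∑ i, Real.sqrt (lam i) ≤ ∑ i, Real.sqrt (a i * b i) :=
        Finset.sum_le_sum fun i _ => hper i
    _ ≤ Real.sqrt ((∑ i, a i) * (∑ i, b i)) := by
        rw [show (Finset.univ : Finset n) = Finset.univ from rfl]
        have hsq := sum_sq_le_sum_mul_sum_of_sq_eq_mul (Finset.univ : Finset n)
          (f := a) (g := b) (r := fun i => Real.sqrt (a i * b i))
          (fun i _ => ha0 i) (fun i _ => hb0 i)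
          (fun i _ => Real.sq_sqrt (mul_nonneg (ha0 i) (hb0 i)))
        have h0 : 0 ≤ ∑ i, Real.sqrt (a i * b i) :=
          Finset.sum_nonneg fun i _ => Real.sqrt_nonneg _
        have := Real.sqrt_le_sqrt hsq
        rwa [Real.sqrt_sq h0] at this
    _ ≤ Real.sqrt (P.trace * Q.trace) := by
        apply Real.sqrt_le_sqrt
        exact mul_le_mul hsuma hsumb hsumb0 (le_trans hsuma0 hsuma)

end keylemma

section LOO
variable {d ι : Type*} [Fintype d] [DecidableEq d] [Fintype ι] [DecidableEq ι]
variable {O : ι → Matrix d d ℂ}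

lemma loo_complete (hherm : ∀ k, (O k).IsHermitian)
    (horth : ∀ k l, (O k * O l).trace = if k = l then 1 else 0)
    (hspan : ∀ M : Matrix d d ℂ, M.IsHermitian → M ∈ Submodule.span ℝ (Set.range O))
    (M : Matrix d d ℂ) : ∑ k, (O k * M).trace • O k = M := by
  let Φ : Matrix d d ℂ →ₗ[ℂ] Matrix d d ℂ :=
    { toFun := fun N => ∑ k, (O k * N).trace • O k
      map_add' := by
        intro x y
        simp [Matrix.mul_add, Matrix.trace_add, add_smul, Finset.sum_add_distrib]
      map_smul' := by
        intro c x
        simp [Matrix.mul_smul, Matrix.trace_smul, smul_smul, Finset.smul_sum] }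
  have htop : Submodule.span ℂ (Set.range O) = ⊤ := by
    rw [Submodule.eq_top_iff']
    intro N
    have hmem : ∀ H : Matrix d d ℂ, H.IsHermitian → H ∈ Submodule.span ℂ (Set.range O) := by
      intro H hH
      exact Submodule.span_le_restrictScalars ℝ ℂ (Set.range O) (hspan H hH)
    have h1 : ((1/2 : ℂ) • (N + Nᴴ)).IsHermitian := by
      rw [Matrix.IsHermitian, conjTranspose_smul, conjTranspose_add, conjTranspose_conjTranspose]
      rw [show star (1/2 : ℂ) = 1/2 by simp]
      rw [add_comm]
    have h2 : ((-(Complex.I)/2 : ℂ) • (N - Nᴴ)).IsHermitian := by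
      rw [Matrix.IsHermitian, conjTranspose_smul, conjTranspose_sub, conjTranspose_conjTranspose]
      rw [show star (-(Complex.I)/2 : ℂ) = Complex.I/2 by
        simp [star_div₀, Complex.star_def, Complex.conj_I]]
      rw [show (Nᴴ - N) = -(N - Nᴴ) by abel]
      rw [smul_neg, ← neg_smul]
      congr 1
      ring
    have hNdec : N = (1/2 : ℂ) • (N + Nᴴ) + Complex.I • ((-(Complex.I)/2 : ℂ) • (N - Nᴴ)) := by
      ext i j
      simp only [Matrix.add_apply, Matrix.smul_apply, Matrix.sub_apply, smul_eq_mul]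
      linear_combination ((N i j - Nᴴ i j)/2) * Complex.I_sq
    rw [hNdec]
    exact Submodule.add_mem _ (hmem _ h1) (Submodule.smul_mem _ _ (hmem _ h2))
  have hid : Φ = LinearMap.id := by
    apply LinearMap.ext_on htop
    rintro x ⟨j, rfl⟩
    show ∑ k, (O k * O j).trace • O k = O j
    calc ∑ k, (O k * O j).trace • O k
        = ∑ k, (if k = j then (1:ℂ) else 0) • O k := by
          refine Finset.sum_congr rfl fun k _ => ?_
          rw [horth k j]
      _ = O j := by simp [ite_smul]
  exact congrFun (congrArg DFunLike.coe hid) M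

lemma loo_entry (hherm : ∀ k, (O k).IsHermitian)
    (horth : ∀ k l, (O k * O l).trace = if k = l then 1 else 0)
    (hspan : ∀ M : Matrix d d ℂ, M.IsHermitian → M ∈ Submodule.span ℝ (Set.range O))
    (y z x w : d) :
    ∑ k, (O k) y z * (O k) x w = (if z = x then 1 else 0) * (if y = w then 1 else 0) := by
  have h := loo_complete hherm horth hspan (Matrix.single z y 1)
  have htr : ∀ k, (O k * Matrix.single z y 1).trace = (O k) y z := by
    intro k
    simp [Matrix.trace, Matrix.diag, Matrix.mul_apply, Matrix.single, Matrix.of_apply,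
      ite_and, Finset.sum_ite_eq, Finset.sum_ite_eq']
  have h2 := congrFun (congrFun h x) w
  simp only [Matrix.sum_apply, Matrix.smul_apply, htr, smul_eq_mul] at h2
  have h3 : Matrix.single z y 1 x w = (if z = x then (1:ℂ) else 0) * (if y = w then 1 else 0) := by
    simp [Matrix.single, Matrix.of_apply, ite_and]
    split <;> simp_all
  rw [h3] at h2
  rw [← h2]

lemma loo_sum_sq (hherm : ∀ k, (O k).IsHermitian)
    (horth : ∀ k l, (O k * O l).trace = if k = l then 1 else 0)
    (hspan : ∀ M : Matrix d d ℂ, M.IsHermitian → M ∈ Submodule.span ℝ (Set.range O)) :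
    ∑ k, O k * O k = (Fintype.card d : ℂ) • (1 : Matrix d d ℂ) := by
  ext a c
  rw [Matrix.sum_apply]
  calc ∑ k, (O k * O k) a c = ∑ k, ∑ b, (O k) a b * (O k) b c := by
        refine Finset.sum_congr rfl fun k _ => ?_
        rw [Matrix.mul_apply]
    _ = ∑ b, ∑ k, (O k) a b * (O k) b c := Finset.sum_comm
    _ = ∑ b : d, (if a = c then (1:ℂ) else 0) := by
        refine Finset.sum_congr rfl fun b _ => ?_
        rw [loo_entry hherm horth hspan a b b c]
        simp
    _ = ((Fintype.card d : ℂ) • (1 : Matrix d d ℂ)) a c := by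
        simp [Matrix.one_apply]

lemma loo_sum_OO (hherm : ∀ k, (O k).IsHermitian)
    (horth : ∀ k l, (O k * O l).trace = if k = l then 1 else 0)
    (hspan : ∀ M : Matrix d d ℂ, M.IsHermitian → M ∈ Submodule.span ℝ (Set.range O))
    (σ : Matrix d d ℂ) :
    ∑ k, (σ * (O k * O k)).trace = (Fintype.card d : ℂ) * σ.trace := by
  calc ∑ k, (σ * (O k * O k)).trace = (σ * ∑ k, O k * O k).trace := by
        rw [Matrix.mul_sum, Matrix.trace_sum]
    _ = (Fintype.card d : ℂ) * σ.trace := by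
        rw [loo_sum_sq hherm horth hspan]
        rw [Matrix.mul_smul, Matrix.mul_one, Matrix.trace_smul]
        simp

lemma loo_sum_traceprod (hherm : ∀ k, (O k).IsHermitian)
    (horth : ∀ k l, (O k * O l).trace = if k = l then 1 else 0)
    (hspan : ∀ M : Matrix d d ℂ, M.IsHermitian → M ∈ Submodule.span ℝ (Set.range O))
    (σ : Matrix d d ℂ) :
    ∑ k, (σ * O k).trace * (σ * O k).trace = (σ * σ).trace := by
  conv_rhs => rw [show (σ * σ).trace = (σ * σ).trace from rfl]
  have hσ := loo_complete hherm horth hspan σ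
  calc ∑ k, (σ * O k).trace * (σ * O k).trace
      = ∑ k, (O k * σ).trace • (σ * O k).trace := by
        refine Finset.sum_congr rfl fun k _ => ?_
        rw [Matrix.trace_mul_comm, smul_eq_mul]
    _ = (σ * ∑ k, (O k * σ).trace • O k).trace := by
        rw [Matrix.mul_sum, Matrix.trace_sum]
        refine (Finset.sum_congr rfl fun k _ => ?_).symm
        rw [Matrix.mul_smul, Matrix.trace_smul]
    _ = (σ * σ).trace := by rw [hσ]

lemma loo_trace_real (σ : Matrix d d ℂ) (hσ : σ.IsHermitian) {k : ι}
    (hk : (O k).IsHermitian) : ((σ * O k).trace).im = 0 := by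
  have h1 : star ((σ * O k).trace) = (σ * O k).trace := by
    rw [← Matrix.trace_conjTranspose, Matrix.conjTranspose_mul, hσ.eq, hk.eq,
      Matrix.trace_mul_comm]
  have := Complex.conj_eq_iff_im.mp h1
  exact this

/-- Trace of the covariance matrix. -/
lemma trace_covMatG (hherm : ∀ k, (O k).IsHermitian)
    (horth : ∀ k l, (O k * O l).trace = if k = l then 1 else 0)
    (hspan : ∀ M : Matrix d d ℂ, M.IsHermitian → M ∈ Submodule.span ℝ (Set.range O))
    (σ : Matrix d d ℂ) (hσ : σ.IsHermitian) :
    (covMatG O σ).trace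
      = (Fintype.card d : ℝ) * σ.trace.re - (σ * σ).trace.re := by
  have hdiag : ∀ i, (covMatG O σ) i i
      = (σ * (O i * O i)).trace.re - ((σ * O i).trace.re) ^ 2 := by
    intro i
    simp [covMatG, Matrix.of_apply]
    ring
  rw [Matrix.trace]
  calc ∑ i, (covMatG O σ).diag i
      = ∑ i, ((σ * (O i * O i)).trace.re - ((σ * O i).trace.re) ^ 2) := by
        exact Finset.sum_congr rfl fun i _ => hdiag i
    _ = (∑ i, (σ * (O i * O i)).trace).re - (∑ i, ((σ * O i).trace * (σ * O i).trace)).re := by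
        rw [Complex.re_sum, Complex.re_sum, ← Finset.sum_sub_distrib]
        refine Finset.sum_congr rfl fun i _ => ?_
        have him := loo_trace_real σ hσ (hherm i)
        rw [Complex.mul_re, him]
        ring
    _ = (Fintype.card d : ℝ) * σ.trace.re - (σ * σ).trace.re := by
        rw [loo_sum_OO hherm horth hspan, loo_sum_traceprod hherm horth hspan]
        simp

end LOO

theorem traceNorm_violation_rules_out_LHS_covariance (dA dB : ℕ)
    (ρ : Matrix (Fin dA × Fin dB) (Fin dA × Fin dB) ℂ)
    (hρ : ρ.PosSemidef) (hρ1 : ρ.trace = 1)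
    (A : Fin (dA ^ 2) → Matrix (Fin dA) (Fin dA) ℂ)
    (hhermA : ∀ k, (A k).IsHermitian)
    (horthA : ∀ k l, (A k * A l).trace = if k = l then 1 else 0)
    (hspanA : ∀ M : Matrix (Fin dA) (Fin dA) ℂ, M.IsHermitian →
      M ∈ Submodule.span ℝ (Set.range A))
    (B : Fin (dB ^ 2) → Matrix (Fin dB) (Fin dB) ℂ)
    (hhermB : ∀ k, (B k).IsHermitian)
    (horthB : ∀ k l, (B k * B l).trace = if k = l then 1 else 0)
    (hspanB : ∀ M : Matrix (Fin dB) (Fin dB) ℂ, M.IsHermitian →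
      M ∈ Submodule.span ℝ (Set.range B)) :
    let ρA : Matrix (Fin dA) (Fin dA) ℂ := Matrix.of fun i i' => ∑ j, ρ (i, j) (i', j)
    let ρB : Matrix (Fin dB) (Fin dB) ℂ := Matrix.of fun j j' => ∑ i, ρ (i, j) (i, j')
    let Cb : Matrix (Fin (dA ^ 2)) (Fin (dB ^ 2)) ℝ := Matrix.of fun k l =>
      (ρ * (A k ⊗ₖ B l)).trace.re - (ρA * A k).trace.re * (ρB * B l).trace.re
    let γAB := Matrix.fromBlocks (covMatG A ρA) Cb Cbᵀ (covMatG B ρB)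
    Real.sqrt (((dA : ℝ) - (ρA * ρA).trace.re) * (1 - (ρB * ρB).trace.re))
        < traceNorm Cb →
      ¬ ∃ (K : ℕ) (p : Fin K → ℝ) (b : Fin K → (Fin dB → ℂ)),
        (∀ k, 0 ≤ p k) ∧ (∑ k, p k = 1) ∧
        (∀ k, ∑ i, Complex.normSq (b k i) = 1) ∧
        (γAB - Matrix.fromBlocks 0 0 0
          (∑ k, p k • covMatG B (Matrix.vecMulVec (b k) (star (b k))))).PosSemidef := by
  intro ρA ρB Cb γAB hlt
  rintro ⟨K, p, bv, hp0, hp1, hbn, hpsd⟩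
  -- Hermiticity and traces of the reduced states
  have hρAherm : ρA.IsHermitian := by
    rw [Matrix.IsHermitian]
    ext i i'
    rw [Matrix.conjTranspose_apply]
    show star (ρA i' i) = ρA i i'
    show star (∑ j, ρ (i', j) (i, j)) = ∑ j, ρ (i, j) (i', j)
    rw [star_sum]
    refine Finset.sum_congr rfl fun j _ => ?_
    have := congrFun (congrFun hρ.1 (i, j)) (i', j)
    rw [Matrix.conjTranspose_apply] at this
    exact this
  have hρBherm : ρB.IsHermitian := by
    rw [Matrix.IsHermitian]
    ext j j'
    rw [Matrix.conjTranspose_apply]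
    show star (ρB j' j) = ρB j j'
    show star (∑ i, ρ (i, j') (i, j)) = ∑ i, ρ (i, j) (i, j')
    rw [star_sum]
    refine Finset.sum_congr rfl fun i _ => ?_
    have := congrFun (congrFun hρ.1 (i, j)) (i, j')
    rw [Matrix.conjTranspose_apply] at this
    exact this
  have hρAtr : ρA.trace = 1 := by
    calc ρA.trace = ∑ i, ∑ j, ρ (i, j) (i, j) := rfl
      _ = ∑ x : Fin dA × Fin dB, ρ x x := (Fintype.sum_prod_type (f := fun x : Fin dA × Fin dB => ρ x x)).symm
      _ = 1 := hρ1
  have hρBtr : ρB.trace = 1 := by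
    calc ρB.trace = ∑ j, ∑ i, ρ (i, j) (i, j) := rfl
      _ = ∑ i, ∑ j, ρ (i, j) (i, j) := Finset.sum_comm
      _ = ∑ x : Fin dA × Fin dB, ρ x x := (Fintype.sum_prod_type (f := fun x : Fin dA × Fin dB => ρ x x)).symm
      _ = 1 := hρ1
  -- the pure states σ_k
  set κ : Matrix (Fin (dB ^ 2)) (Fin (dB ^ 2)) ℝ :=
    ∑ k, p k • covMatG B (Matrix.vecMulVec (bv k) (star (bv k))) with hκdef
  have hσherm : ∀ k, (Matrix.vecMulVec (bv k) (star (bv k))).IsHermitian := by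
    intro k
    rw [Matrix.IsHermitian]
    ext i j
    rw [Matrix.conjTranspose_apply]
    simp [Matrix.vecMulVec_apply, mul_comm]
  have hσtr : ∀ k, (Matrix.vecMulVec (bv k) (star (bv k))).trace = 1 := by
    intro k
    rw [Matrix.trace]
    have : ∀ i, (Matrix.vecMulVec (bv k) (star (bv k))).diag i
        = (Complex.normSq (bv k i) : ℂ) := by
      intro i
      simp [Matrix.diag_apply, Matrix.vecMulVec_apply, Complex.mul_conj]
    rw [Finset.sum_congr rfl fun i _ => this i]
    rw [← Complex.ofReal_sum, hbn k]
    simp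
  have hσsq : ∀ k, Matrix.vecMulVec (bv k) (star (bv k)) * Matrix.vecMulVec (bv k) (star (bv k))
      = Matrix.vecMulVec (bv k) (star (bv k)) := by
    intro k
    ext i j
    rw [Matrix.mul_apply]
    simp only [Matrix.vecMulVec_apply, Pi.star_apply]
    calc ∑ c, bv k i * star (bv k c) * (bv k c * star (bv k j))
        = (bv k i * star (bv k j)) * ∑ c, (Complex.normSq (bv k c) : ℂ) := by
          rw [Finset.mul_sum]
          refine Finset.sum_congr rfl fun c _ => ?_
          rw [Complex.normSq_eq_conj_mul_self]
          simp only [Complex.star_def]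
          ring
      _ = bv k i * star (bv k j) := by
          rw [← Complex.ofReal_sum, hbn k]
          simp
  have hκtr : κ.trace = (dB : ℝ) - 1 := by
    rw [hκdef, Matrix.trace_sum]
    have : ∀ k, (p k • covMatG B (Matrix.vecMulVec (bv k) (star (bv k)))).trace
        = p k * ((dB : ℝ) - 1) := by
      intro k
      rw [Matrix.trace_smul, trace_covMatG hhermB horthB hspanB _ (hσherm k), hσtr k, hσsq k,
        hσtr k]
      simp
    rw [Finset.sum_congr rfl fun k _ => this k, ← Finset.sum_mul, hp1, one_mul]
  -- block decomposition
  have hpsd' : (Matrix.fromBlocks (covMatG A ρA) Cb Cbᵀ (covMatG B ρB - κ)).PosSemidef := by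
    have heq : γAB - Matrix.fromBlocks 0 0 0 κ
        = Matrix.fromBlocks (covMatG A ρA) Cb Cbᵀ (covMatG B ρB - κ) := by
      show Matrix.fromBlocks (covMatG A ρA) Cb Cbᵀ (covMatG B ρB) - Matrix.fromBlocks 0 0 0 κ = _
      rw [sub_eq_add_neg, Matrix.fromBlocks_neg, Matrix.fromBlocks_add]
      simp [sub_eq_add_neg]
    rw [← heq]
    exact hpsd
  -- traces of the diagonal blocks
  have hPtr : (covMatG A ρA).trace = (dA : ℝ) - (ρA * ρA).trace.re := by
    rw [trace_covMatG hhermA horthA hspanA ρA hρAherm, hρAtr]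
    simp
  have hQtr : (covMatG B ρB - κ).trace = 1 - (ρB * ρB).trace.re := by
    rw [Matrix.trace_sub, trace_covMatG hhermB horthB hspanB ρB hρBherm, hρBtr, hκtr]
    simp
    try ring
  have hfin := traceNorm_le_sqrt_trace_mul_trace hpsd'
  rw [hPtr, hQtr] at hfin
  exact absurd (lt_of_le_of_lt hfin hlt) (lt_irrefl _)
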